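/- arXiv:2508.00522 — 3 statements merged into one kernel-verified Lean document; each statement's English description precedes it below -/
import Mathlib

section
/- Let L : ℝ^{n×m} → ℝ be differentiable, and let ρ > 0 and s > 0. Let x : ℝ → ℝ^n and y : ℝ → ℝ^m be differentiable curves such that for all t, y_t ≠ 0 and G_t := ∇L(x_t y_tᵀ) ≠ 0. Define the perturbed point x̃_t := x_t + (ρ/s)·‖y_t‖⁻²·(G_t/‖G_t‖_F)·y_t and ỹ_t := y_t, let G̃_t := ∇L(x̃_t ỹ_tᵀ), and suppose the curves follow the limiting flow of Flat-LoRA: dx_t/dt = −G̃_t ỹ_t and dy_t/dt = −G̃_tᵀ x̃_t. Then the balancedness B_t := (1/2)(‖x_t‖² − ‖y_t‖²) satisfies |dB_t/dt| ≤ (ρ/s)·‖y_t‖⁻¹·‖G̃_t y_t‖ for all t. -/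
/- Frobenius norm / normed-space structure on matrices, matching the paper's
   Frobenius inner product convention. -/
attribute [local instance] Matrix.frobeniusNormedAddCommGroup Matrix.frobeniusNormedSpace

open scoped BigOperators

/-- Matrix–vector product landing in Euclidean space. -/
noncomputable def mulVecE {n m : ℕ} (G : Matrix (Fin n) (Fin m) ℝ)
    (y : EuclideanSpace ℝ (Fin m)) : EuclideanSpace ℝ (Fin n) :=
  (WithLp.equiv 2 (Fin n → ℝ)).symm (G.mulVec y)

/-- Transposed matrix–vector product `Gᵀ x` landing in Euclidean space. -/
noncomputable def vecMulE {n m : ℕ} (G : Matrix (Fin n) (Fin m) ℝ)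
    (x : EuclideanSpace ℝ (Fin n)) : EuclideanSpace ℝ (Fin m) :=
  (WithLp.equiv 2 (Fin m → ℝ)).symm (G.transpose.mulVec x)

/-- Outer product `x yᵀ` of two Euclidean vectors. -/
noncomputable def outerE {n m : ℕ} (x : EuclideanSpace ℝ (Fin n))
    (y : EuclideanSpace ℝ (Fin m)) : Matrix (Fin n) (Fin m) ℝ :=
  Matrix.of fun i j => x i * y j

/-- Frobenius norm of a matrix, written explicitly. -/
noncomputable def frobNorm {n m : ℕ} (G : Matrix (Fin n) (Fin m) ℝ) : ℝ :=
  Real.sqrt (∑ i, ∑ j, (G i j) ^ 2)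

lemma inner_vecMulE {n m : ℕ} (Gm : Matrix (Fin n) (Fin m) ℝ)
    (xv : EuclideanSpace ℝ (Fin n)) (yv : EuclideanSpace ℝ (Fin m)) :
    (inner ℝ (vecMulE Gm xv) yv : ℝ) = inner ℝ (mulVecE Gm yv) xv := by
  simp only [PiLp.inner_apply, RCLike.inner_apply, starRingEnd_apply, star_trivial,
    vecMulE, mulVecE, WithLp.equiv_symm_apply, PiLp.toLp_apply, Matrix.mulVec, dotProduct,
    Matrix.transpose_apply, Finset.sum_mul]
  simp only [Finset.mul_sum]
  rw [Finset.sum_comm]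
  apply Finset.sum_congr rfl; intro i _
  apply Finset.sum_congr rfl; intro j _
  ring

lemma frobNorm_pos {n m : ℕ} {Gm : Matrix (Fin n) (Fin m) ℝ} (h : Gm ≠ 0) :
    0 < frobNorm Gm := by
  rw [frobNorm, Real.sqrt_pos]
  have : ∃ i j, Gm i j ≠ 0 := by
    by_contra hc
    push_neg at hc
    exact h (by ext i j; simp [hc i j])
  obtain ⟨i, j, hij⟩ := this
  have h1 : 0 < ∑ j', (Gm i j') ^ 2 :=
    Finset.sum_pos' (fun _ _ => sq_nonneg _)
      ⟨j, Finset.mem_univ j, by positivity⟩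
  exact Finset.sum_pos' (fun i' _ => Finset.sum_nonneg fun _ _ => sq_nonneg _)
    ⟨i, Finset.mem_univ i, h1⟩

lemma norm_mulVecE_le {n m : ℕ} (Gm : Matrix (Fin n) (Fin m) ℝ)
    (yv : EuclideanSpace ℝ (Fin m)) :
    ‖mulVecE Gm yv‖ ≤ frobNorm Gm * ‖yv‖ := by
  have hnorm : ‖mulVecE Gm yv‖ = Real.sqrt (∑ i, (Gm.mulVec yv i) ^ 2) := by
    rw [EuclideanSpace.norm_eq]
    congr 1
    apply Finset.sum_congr rfl; intro i _
    simp [mulVecE, WithLp.equiv_symm_apply, PiLp.toLp_apply, sq_abs]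
  have hy : ‖yv‖ = Real.sqrt (∑ j, (yv j) ^ 2) := by
    rw [EuclideanSpace.norm_eq]
    congr 1
    apply Finset.sum_congr rfl; intro j _
    simp [sq_abs]
  rw [hnorm, hy, frobNorm, ← Real.sqrt_mul (Finset.sum_nonneg fun (_ : Fin n) _ =>
    Finset.sum_nonneg fun (_ : Fin m) _ => sq_nonneg (Gm _ _))]
  apply Real.sqrt_le_sqrt
  rw [Finset.sum_mul]
  apply Finset.sum_le_sum
  intro i _
  exact Finset.sum_mul_sq_le_sq_mul_sq Finset.univ (fun j => Gm i j) (fun j => yv j)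

/-- **Theorem 1 (Balancedness of Flat-LoRA).**
Under the limiting flow of Flat-LoRA, the balancedness
`B_t = (1/2)(‖x_t‖² − ‖y_t‖²)` satisfies
`|dB_t/dt| ≤ (ρ/s) ‖y_t‖⁻¹ ‖G̃_t y_t‖`. -/
theorem flatLoRA_balancedness {n m : ℕ}
    (L : Matrix (Fin n) (Fin m) ℝ → ℝ) (hL : Differentiable ℝ L)
    (ρ s : ℝ) (hρ : 0 < ρ) (hs : 0 < s)
    (x : ℝ → EuclideanSpace ℝ (Fin n)) (y : ℝ → EuclideanSpace ℝ (Fin m))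
    (G Gtil : ℝ → Matrix (Fin n) (Fin m) ℝ)
    (xtil : ℝ → EuclideanSpace ℝ (Fin n))
    (hy : ∀ t, y t ≠ 0) (hGne : ∀ t, G t ≠ 0)
    -- `G t` is the gradient of `L` at `x_t y_tᵀ` (Frobenius inner product convention)
    (hG : ∀ t H, fderiv ℝ L (outerE (x t) (y t)) H = ∑ i, ∑ j, G t i j * H i j)
    -- the perturbed point `x̃_t = x_t + (ρ/s)‖y_t‖⁻² (G_t/‖G_t‖_F) y_t`, `ỹ_t = y_t`
    (hxtil : ∀ t, xtil t =
      x t + ((ρ / s) * (‖y t‖ ^ 2)⁻¹ * (frobNorm (G t))⁻¹) • mulVecE (G t) (y t))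
    -- `G̃_t` is the gradient of `L` at `x̃_t ỹ_tᵀ`
    (hGtil : ∀ t H, fderiv ℝ L (outerE (xtil t) (y t)) H = ∑ i, ∑ j, Gtil t i j * H i j)
    -- the limiting flow of Flat-LoRA
    (hx' : ∀ t, HasDerivAt x (-(mulVecE (Gtil t) (y t))) t)
    (hy' : ∀ t, HasDerivAt y (-(vecMulE (Gtil t) (xtil t))) t) :
    ∀ t, |deriv (fun u => (1 / 2 : ℝ) * (‖x u‖ ^ 2 - ‖y u‖ ^ 2)) t|
      ≤ (ρ / s) * ‖y t‖⁻¹ * ‖mulVecE (Gtil t) (y t)‖ := by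
  intro t
  set c : ℝ := (ρ / s) * (‖y t‖ ^ 2)⁻¹ * (frobNorm (G t))⁻¹ with hc
  set g : EuclideanSpace ℝ (Fin n) := mulVecE (Gtil t) (y t) with hg
  have hyn : 0 < ‖y t‖ := norm_pos_iff.mpr (hy t)
  have hGf : 0 < frobNorm (G t) := frobNorm_pos (hGne t)
  have hcpos : 0 ≤ c := by positivity
  -- the derivative of the balancedness
  have hBx : HasDerivAt (fun u => (inner ℝ (x u) (x u) : ℝ))
      ((inner ℝ (x t) (-g) : ℝ) + inner ℝ (-g) (x t)) t :=
    HasDerivAt.inner ℝ (hx' t) (hx' t)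
  have hBy : HasDerivAt (fun u => (inner ℝ (y u) (y u) : ℝ))
      ((inner ℝ (y t) (-(vecMulE (Gtil t) (xtil t))) : ℝ)
        + inner ℝ (-(vecMulE (Gtil t) (xtil t))) (y t)) t :=
    HasDerivAt.inner ℝ (hy' t) (hy' t)
  have hB : HasDerivAt (fun u => (1 / 2 : ℝ) * (‖x u‖ ^ 2 - ‖y u‖ ^ 2))
      ((1 / 2 : ℝ) * (((inner ℝ (x t) (-g) : ℝ) + inner ℝ (-g) (x t))
        - ((inner ℝ (y t) (-(vecMulE (Gtil t) (xtil t))) : ℝ)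
        + inner ℝ (-(vecMulE (Gtil t) (xtil t))) (y t)))) t := by
    have := ((hBx.sub hBy).const_mul (1 / 2 : ℝ))
    refine this.congr_of_eventuallyEq (Filter.Eventually.of_forall fun u => ?_)
    simp only [Pi.sub_apply, real_inner_self_eq_norm_sq]
  rw [hB.deriv]
  -- simplify the derivative to `c * ⟪g, G_t y_t⟫`
  have hD : (1 / 2 : ℝ) * (((inner ℝ (x t) (-g) : ℝ) + inner ℝ (-g) (x t))
        - ((inner ℝ (y t) (-(vecMulE (Gtil t) (xtil t))) : ℝ)
        + inner ℝ (-(vecMulE (Gtil t) (xtil t))) (y t)))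
      = c * (inner ℝ g (mulVecE (G t) (y t)) : ℝ) := by
    have h1 : (inner ℝ (vecMulE (Gtil t) (xtil t)) (y t) : ℝ) = inner ℝ g (xtil t) := by
      rw [inner_vecMulE, hg, real_inner_comm]
    have h2 : (inner ℝ (y t) (vecMulE (Gtil t) (xtil t)) : ℝ) = inner ℝ g (xtil t) := by
      rw [real_inner_comm]; exact h1
    have h3 : (inner ℝ g (xtil t) : ℝ) = inner ℝ g (x t) + c * inner ℝ g (mulVecE (G t) (y t)) := by
      rw [hxtil t, inner_add_right, real_inner_smul_right]
    simp only [inner_neg_left, inner_neg_right]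
    rw [h2]
    rw [real_inner_comm (x t) g] at *
    rw [h1, h3]
    ring
  rw [hD]
  -- bound via Cauchy–Schwarz and `‖G y‖ ≤ ‖G‖_F ‖y‖`
  have hCS : |(inner ℝ g (mulVecE (G t) (y t)) : ℝ)| ≤ ‖g‖ * ‖mulVecE (G t) (y t)‖ :=
    abs_real_inner_le_norm _ _
  have hGy : ‖mulVecE (G t) (y t)‖ ≤ frobNorm (G t) * ‖y t‖ := norm_mulVecE_le _ _
  calc |c * (inner ℝ g (mulVecE (G t) (y t)) : ℝ)|
      = c * |(inner ℝ g (mulVecE (G t) (y t)) : ℝ)| := by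
        rw [abs_mul, abs_of_nonneg hcpos]
    _ ≤ c * (‖g‖ * (frobNorm (G t) * ‖y t‖)) := by
        apply mul_le_mul_of_nonneg_left _ hcpos
        exact hCS.trans (mul_le_mul_of_nonneg_left hGy (norm_nonneg _))
    _ = (ρ / s) * ‖y t‖⁻¹ * ‖g‖ := by
        rw [hc]
        field_simp
end

section
/- Let L : ℝ^{n×m} → ℝ be differentiable, and let ρ > 0 and s > 0. Let x : ℝ → ℝ^n and y : ℝ → ℝ^m be differentiable curves such that for all t, y_t ≠ 0 and G_t := ∇L(x_t y_tᵀ) ≠ 0. Define x̃_t := x_t + (ρ/s)·‖y_t‖⁻²·(G_t/‖G_t‖_F)·y_t and ỹ_t := y_t, let G̃_t := ∇L(x̃_t ỹ_tᵀ), and suppose dx_t/dt = −G̃_t ỹ_t and dy_t/dt = −G̃_tᵀ x̃_t. Then the balancedness B_t := (1/2)(‖x_t‖² − ‖y_t‖²) satisfies the exact identity dB_t/dt = (ρ/(s·‖y_t‖²))·⟨(G_t/‖G_t‖_F)·y_t, G̃_t·y_t⟩, where ⟨·,·⟩ is the Euclidean inner product on ℝ^n. -/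
attribute [local instance] Matrix.frobeniusNormedAddCommGroup Matrix.frobeniusNormedSpace

open scoped BigOperators RealInnerProductSpace

/-- Adjoint identity: `⟪Gᵀx, y⟫ = ⟪x, Gy⟫`. -/
lemma adjE {n m : ℕ} (G : Matrix (Fin n) (Fin m) ℝ) (x : EuclideanSpace ℝ (Fin n))
    (y : EuclideanSpace ℝ (Fin m)) : ⟪vecMulE G x, y⟫ = ⟪x, mulVecE G y⟫ := by
  simp only [vecMulE, mulVecE, PiLp.inner_apply, WithLp.equiv_symm_apply, PiLp.toLp_apply,
    Matrix.mulVec, dotProduct, Matrix.transpose_apply, RCLike.inner_apply,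
    starRingEnd_apply, star_trivial, Finset.sum_mul, Finset.mul_sum]
  rw [Finset.sum_comm]
  exact Finset.sum_congr rfl fun i _ => Finset.sum_congr rfl fun j _ => by ring

/-- **Key identity in the proof of Theorem 1.** Under the limiting flow of Flat-LoRA,
`dB_t/dt = (ρ/(s‖y_t‖²)) ⟪(G_t/‖G_t‖_F) y_t, G̃_t y_t⟫`. -/
theorem flatLoRA_balancedness_identity {n m : ℕ}
    (L : Matrix (Fin n) (Fin m) ℝ → ℝ) (hL : Differentiable ℝ L)
    (ρ s : ℝ) (hρ : 0 < ρ) (hs : 0 < s)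
    (x : ℝ → EuclideanSpace ℝ (Fin n)) (y : ℝ → EuclideanSpace ℝ (Fin m))
    (G Gtil : ℝ → Matrix (Fin n) (Fin m) ℝ)
    (xtil : ℝ → EuclideanSpace ℝ (Fin n))
    (hy : ∀ t, y t ≠ 0) (hGne : ∀ t, G t ≠ 0)
    -- `G t` is the gradient of `L` at `x_t y_tᵀ` (Frobenius inner product convention)
    (hG : ∀ t H, fderiv ℝ L (outerE (x t) (y t)) H = ∑ i, ∑ j, G t i j * H i j)
    -- the perturbed point `x̃_t = x_t + (ρ/s)‖y_t‖⁻² (G_t/‖G_t‖_F) y_t`, `ỹ_t = y_t`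
    (hxtil : ∀ t, xtil t =
      x t + ((ρ / s) * (‖y t‖ ^ 2)⁻¹ * (frobNorm (G t))⁻¹) • mulVecE (G t) (y t))
    -- `G̃_t` is the gradient of `L` at `x̃_t ỹ_tᵀ`
    (hGtil : ∀ t H, fderiv ℝ L (outerE (xtil t) (y t)) H = ∑ i, ∑ j, Gtil t i j * H i j)
    -- the limiting flow of Flat-LoRA
    (hx' : ∀ t, HasDerivAt x (-(mulVecE (Gtil t) (y t))) t)
    (hy' : ∀ t, HasDerivAt y (-(vecMulE (Gtil t) (xtil t))) t) :
    ∀ t, deriv (fun u => (1 / 2 : ℝ) * (‖x u‖ ^ 2 - ‖y u‖ ^ 2)) t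
      = (ρ / (s * ‖y t‖ ^ 2)) *
        ⟪(frobNorm (G t))⁻¹ • mulVecE (G t) (y t), mulVecE (Gtil t) (y t)⟫ := by
  intro t
  set a := mulVecE (Gtil t) (y t) with ha
  set b := vecMulE (Gtil t) (xtil t) with hb
  set c := (ρ / s) * (‖y t‖ ^ 2)⁻¹ * (frobNorm (G t))⁻¹ with hc
  have hx2 : HasDerivAt (fun u => ⟪x u, x u⟫) (⟪x t, -a⟫ + ⟪-a, x t⟫) t :=
    (hx' t).inner ℝ (hx' t)
  have hy2 : HasDerivAt (fun u => ⟪y u, y u⟫) (⟪y t, -b⟫ + ⟪-b, y t⟫) t :=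
    (hy' t).inner ℝ (hy' t)
  have hB : HasDerivAt (fun u => (1 / 2 : ℝ) * (‖x u‖ ^ 2 - ‖y u‖ ^ 2))
      ((1 / 2 : ℝ) * ((⟪x t, -a⟫ + ⟪-a, x t⟫) - (⟪y t, -b⟫ + ⟪-b, y t⟫))) t := by
    have := ((hx2.sub hy2).const_mul (1 / 2 : ℝ))
    simpa only [real_inner_self_eq_norm_sq, Pi.sub_apply] using this
  rw [hB.deriv]
  have hadj : ⟪b, y t⟫ = ⟪xtil t, a⟫ := adjE (Gtil t) (xtil t) (y t)
  have hxa : ⟪xtil t, a⟫ = ⟪x t, a⟫ + c * ⟪mulVecE (G t) (y t), a⟫ := by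
    rw [hxtil t, inner_add_left, real_inner_smul_left]
  have hyne : ‖y t‖ ≠ 0 := norm_ne_zero_iff.mpr (hy t)
  have : (1 / 2 : ℝ) * ((⟪x t, -a⟫ + ⟪-a, x t⟫) - (⟪y t, -b⟫ + ⟪-b, y t⟫))
      = c * ⟪mulVecE (G t) (y t), a⟫ := by
    rw [real_inner_comm (-a) (x t), real_inner_comm (-b) (y t), inner_neg_left (𝕜 := ℝ) a (x t), inner_neg_left (𝕜 := ℝ) b (y t)]
    rw [hadj, hxa, real_inner_comm a (x t)]; ring
  rw [this, real_inner_smul_left, hc]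
  field_simp
end

section
/- Let s ≠ 0, W₀ ∈ ℝ^{n×m}, B ∈ ℝ^{n×r}, and A ∈ ℝ^{r×m} with A·Aᵀ invertible, and let A⁺ := Aᵀ·(A·Aᵀ)⁻¹. Suppose the full-space perturbation E^W ∈ ℝ^{n×m} satisfies E^W = M·A for some M ∈ ℝ^{n×r} (its rows lie in the row space of A). Define the low-rank perturbation E^B := (1/s)·E^W·A⁺ on the matrix B, with no perturbation on A. Then W₀ + s·(B + E^B)·A = W₀ + s·B·A + E^W, and consequently for every function L : ℝ^{n×m} → ℝ, the perturbed low-rank loss equals the perturbed full-space loss: L(W₀ + s·(B + E^B)·A) = L(W₀ + s·B·A + E^W). -/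
open Matrix

/-- **Perturbation transfer (Eqs. (14)–(15)).** If the full-space perturbation
`E^W = M·A` has its rows in the row space of `A` (with `A·Aᵀ` invertible and
`A⁺ = Aᵀ(AAᵀ)⁻¹`), then the low-rank perturbation `E^B = (1/s)·E^W·A⁺` on `B`
reproduces exactly the same perturbed weight, hence the same perturbed loss for
every loss function `L`. -/
theorem lora_perturbation_transfer {n m r : ℕ}
    (s : ℝ) (hs : s ≠ 0)
    (W₀ : Matrix (Fin n) (Fin m) ℝ) (B : Matrix (Fin n) (Fin r) ℝ)
    (A : Matrix (Fin r) (Fin m) ℝ) [Invertible (A * Aᵀ)]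
    (EW : Matrix (Fin n) (Fin m) ℝ) (M : Matrix (Fin n) (Fin r) ℝ)
    (hEW : EW = M * A) :
    W₀ + s • ((B + (1 / s) • (EW * (Aᵀ * (A * Aᵀ)⁻¹))) * A)
        = W₀ + s • (B * A) + EW ∧
    ∀ L : Matrix (Fin n) (Fin m) ℝ → ℝ,
      L (W₀ + s • ((B + (1 / s) • (EW * (Aᵀ * (A * Aᵀ)⁻¹))) * A))
        = L (W₀ + s • (B * A) + EW) := by
  have key : EW * (Aᵀ * (A * Aᵀ)⁻¹) * A = EW := by
    have : EW * (Aᵀ * (A * Aᵀ)⁻¹) * A = M * ((A * Aᵀ) * (A * Aᵀ)⁻¹) * A := by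
      rw [hEW]; simp only [Matrix.mul_assoc]
    rw [this, Matrix.mul_inv_of_invertible, Matrix.mul_one, ← hEW]
  have h : W₀ + s • ((B + (1 / s) • (EW * (Aᵀ * (A * Aᵀ)⁻¹))) * A)
      = W₀ + s • (B * A) + EW := by
    rw [Matrix.add_mul, smul_add, Matrix.smul_mul, key, smul_smul,
      mul_one_div_cancel hs, one_smul, add_assoc]
  exact ⟨h, fun L => by rw [h]⟩
end
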